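/- The hohh proof system admits an instantiation lemma: if Ξ; Γ ⊢ G[c/x] is derivable where c ∈ Ξ is a constant not occurring in Γ or G, then for any Ξ-term t of the same type as c, Ξ; Γ ⊢ G[t/x] is derivable, with a derivation of the same height. -/

import Mathlib

/- Simple types for the hohh logic (o is the type of propositions). -/
inductive Ty : Type where
  | o : Ty
  | base : Nat → Ty
  | arr : Ty → Ty → Ty

/- Simply typed λ-terms over a signature of constants (de Bruijn variables). -/
inductive Tm : Type where
  | const : Nat → Tm
  | var : Nat → Tm
  | app : Tm → Tm → Tm
  | lam : Ty → Tm → Tm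

def liftTm (d : Nat) : Tm → Tm
  | .const c => .const c
  | .var k => if k < d then .var k else .var (k+1)
  | .app m n => .app (liftTm d m) (liftTm d n)
  | .lam τ m => .lam τ (liftTm (d+1) m)

def substTm (d : Nat) (s : Tm) : Tm → Tm
  | .const c => .const c
  | .var k => if k = d then s else if d < k then .var (k-1) else .var k
  | .app m n => .app (substTm d s m) (substTm d s n)
  | .lam τ m => .lam τ (substTm (d+1) (liftTm 0 s) m)

def constsOf : Tm → List Nat
  | .const c => [c]
  | .var _ => []
  | .app m n => constsOf m ++ constsOf n
  | .lam _ m => constsOf m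

/- hohh formulas: ⊤, atoms, implication, universal quantification. -/
inductive Fm : Type where
  | top : Fm
  | atom : Tm → Fm
  | imp : Fm → Fm → Fm
  | all : Ty → Fm → Fm

def substFm (d : Nat) (s : Tm) : Fm → Fm
  | .top => .top
  | .atom t => .atom (substTm d s t)
  | .imp f g => .imp (substFm d s f) (substFm d s g)
  | .all τ f => .all τ (substFm (d+1) (liftTm 0 s) f)

def constsOfFm : Fm → List Nat
  | .top => []
  | .atom t => constsOf t
  | .imp f g => constsOfFm f ++ constsOfFm g
  | .all _ f => constsOfFm f

/- Goal (G) and program-clause (D) formulas. -/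
mutual
inductive IsG : Fm → Prop where
  | top : IsG .top
  | atom : IsG (.atom t)
  | imp : IsD D → IsG G → IsG (.imp D G)
  | all : IsG G → IsG (.all τ G)
inductive IsD : Fm → Prop where
  | atom : IsD (.atom t)
  | imp : IsG G → IsD D → IsD (.imp G D)
  | all : IsD D → IsD (.all τ D)
end

/- A Ξ-term: all its constants come from the signature Ξ. -/
def XiTm (Ξ : Finset Nat) (t : Tm) : Prop := ∀ c ∈ constsOf t, c ∈ Ξ

/- The hohh proof system: goal-reduction rules (⊤R, ⊃R, ∀R) and backchaining. -/
mutual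
inductive HSeq : Finset Nat → Set Fm → Fm → Prop where
  | top : HSeq Ξ Γ .top
  | impR : HSeq Ξ (insert D Γ) G → HSeq Ξ Γ (.imp D G)
  | allR : c ∉ Ξ → HSeq (insert c Ξ) Γ (substFm 0 (.const c) G) →
      HSeq Ξ Γ (.all τ G)
  | bc : D ∈ Γ → Focus Ξ Γ D t → HSeq Ξ Γ (.atom t)
inductive Focus : Finset Nat → Set Fm → Fm → Tm → Prop where
  | init : Focus Ξ Γ (.atom t) t
  | imp : HSeq Ξ Γ G → Focus Ξ Γ D t → Focus Ξ Γ (.imp G D) t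
  | all : XiTm Ξ s → Focus Ξ Γ (substFm 0 s D) t → Focus Ξ Γ (.all τ D) t
end

/- Typing of terms over the signature typing cs. -/
inductive HasTyS (cs : Nat → Ty) : List Ty → Tm → Ty → Prop where
  | const : HasTyS cs Γ (.const c) (cs c)
  | var : Γ[k]? = some τ → HasTyS cs Γ (.var k) τ
  | app : HasTyS cs Γ m (.arr τ σ) → HasTyS cs Γ n τ → HasTyS cs Γ (.app m n) σ
  | lam : HasTyS cs (τ :: Γ) m σ → HasTyS cs Γ (.lam τ m) (.arr τ σ)

/- Height-indexed version of the hohh proof system. -/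
mutual
inductive SeqH : Nat → Finset Nat → Set Fm → Fm → Prop where
  | top : SeqH 1 Ξ Γ .top
  | impR : SeqH n Ξ (insert D Γ) G → SeqH (n+1) Ξ Γ (.imp D G)
  | allR : c ∉ Ξ → SeqH n (insert c Ξ) Γ (substFm 0 (.const c) G) →
      SeqH (n+1) Ξ Γ (.all τ G)
  | bc : D ∈ Γ → FocusH n Ξ Γ D t → SeqH (n+1) Ξ Γ (.atom t)
inductive FocusH : Nat → Finset Nat → Set Fm → Fm → Tm → Prop where
  | init : FocusH 1 Ξ Γ (.atom t) t
  | imp : SeqH m Ξ Γ G → FocusH n Ξ Γ D t → FocusH (max m n + 1) Ξ Γ (.imp G D) t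
  | all : XiTm Ξ s → FocusH n Ξ Γ (substFm 0 s D) t → FocusH (n+1) Ξ Γ (.all τ D) t
end

/-- Replace constant `c` by term `t` in a term. -/
def repTm (c : Nat) (t : Tm) : Tm → Tm
  | .const k => if k = c then t else .const k
  | .var k => .var k
  | .app m n => .app (repTm c t m) (repTm c t n)
  | .lam τ m => .lam τ (repTm c t m)

/-- Replace constant `c` by term `t` in a formula. -/
def repFm (c : Nat) (t : Tm) : Fm → Fm
  | .top => .top
  | .atom u => .atom (repTm c t u)
  | .imp f g => .imp (repFm c t f) (repFm c t g)
  | .all τ f => .all τ (repFm c t f)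

/-- All de Bruijn variables of the term are `< d`. -/
def varLt : Nat → Tm → Prop
  | _, .const _ => True
  | d, .var k => k < d
  | d, .app m n => varLt d m ∧ varLt d n
  | d, .lam _ m => varLt (d+1) m

lemma lift_of_varLt (m : Tm) : ∀ d e, varLt d m → d ≤ e → liftTm e m = m := by
  induction m with
  | const k => intro d e _ _; rfl
  | var k => intro d e h hle; simp only [varLt] at h; simp [liftTm]; omega
  | app a b iha ihb =>
      intro d e h hle
      simp only [varLt] at h
      simp [liftTm, iha d e h.1 hle, ihb d e h.2 hle]
  | lam τ a ih =>
      intro d e h hle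
      simp only [varLt] at h
      simp [liftTm, ih (d+1) (e+1) h (by omega)]

lemma subst_of_varLt (m : Tm) : ∀ d e s, varLt d m → d ≤ e → substTm e s m = m := by
  induction m with
  | const k => intro d e s _ _; rfl
  | var k =>
      intro d e s h hle
      simp only [varLt] at h
      simp only [substTm]
      rw [if_neg (by omega), if_neg (by omega)]
  | app a b iha ihb =>
      intro d e s h hle
      simp only [varLt] at h
      simp [substTm, iha d e s h.1 hle, ihb d e s h.2 hle]
  | lam τ a ih =>
      intro d e s h hle
      simp only [varLt] at h
      simp [substTm, ih (d+1) (e+1) _ h (by omega)]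

lemma hasty_varLt {cs : Nat → Ty} {Γ : List Ty} {m : Tm} {τ : Ty}
    (h : HasTyS cs Γ m τ) : varLt Γ.length m := by
  induction h with
  | const => trivial
  | @var Γ k τ h =>
      have := List.getElem?_eq_some_iff.mp h
      exact this.1
  | app _ _ ih1 ih2 => exact ⟨ih1, ih2⟩
  | lam _ ih => exact ih

section Rep
variable {c : Nat} {t : Tm}

lemma rep_lift (hcl : ∀ e, liftTm e t = t) :
    ∀ (m : Tm) (d : Nat), liftTm d (repTm c t m) = repTm c t (liftTm d m) := by
  intro m
  induction m with
  | const k =>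
      intro d
      by_cases hk : k = c <;> simp [repTm, liftTm, hk, hcl]
  | var k =>
      intro d
      simp only [repTm, liftTm]
      split_ifs <;> rfl
  | app a b iha ihb => intro d; simp [repTm, liftTm, iha, ihb]
  | lam τ a ih => intro d; simp [repTm, liftTm, ih]

lemma rep_subst (hcl : ∀ e, liftTm e t = t) (hcs : ∀ e s, substTm e s t = t) :
    ∀ (m : Tm) (d : Nat) (s : Tm),
      repTm c t (substTm d s m) = substTm d (repTm c t s) (repTm c t m) := by
  intro m
  induction m with
  | const k =>
      intro d s
      by_cases hk : k = c <;> simp [repTm, substTm, hk, hcs]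
  | var k =>
      intro d s
      simp only [substTm, repTm]
      split_ifs <;> rfl
  | app a b iha ihb => intro d s; simp [repTm, substTm, iha, ihb]
  | lam τ a ih =>
      intro d s
      simp [repTm, substTm, ih, rep_lift hcl]

lemma rep_substFm (hcl : ∀ e, liftTm e t = t) (hcs : ∀ e s, substTm e s t = t) :
    ∀ (f : Fm) (d : Nat) (s : Tm),
      repFm c t (substFm d s f) = substFm d (repTm c t s) (repFm c t f) := by
  intro f
  induction f with
  | top => intro d s; rfl
  | atom u => intro d s; simp [repFm, substFm, rep_subst hcl hcs]
  | imp f g ihf ihg => intro d s; simp [repFm, substFm, ihf, ihg]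
  | all τ f ih => intro d s; simp [repFm, substFm, ih, rep_lift hcl]

lemma rep_noc : ∀ m : Tm, c ∉ constsOf m → repTm c t m = m := by
  intro m
  induction m with
  | const k =>
      intro h
      simp [constsOf] at h
      simp [repTm, Ne.symm h]
  | var k => intro _; rfl
  | app a b iha ihb =>
      intro h
      simp [constsOf] at h
      simp [repTm, iha h.1, ihb h.2]
  | lam τ a ih =>
      intro h
      simp [constsOf] at h
      simp [repTm, ih h]

lemma rep_nocFm : ∀ f : Fm, c ∉ constsOfFm f → repFm c t f = f := by
  intro f
  induction f with
  | top => intro _; rfl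
  | atom u => intro h; simp only [constsOfFm] at h; simp [repFm, rep_noc _ h]
  | imp f g ihf ihg =>
      intro h
      simp [constsOfFm] at h
      simp [repFm, ihf h.1, ihg h.2]
  | all τ f ih =>
      intro h
      simp only [constsOfFm] at h
      simp [repFm, ih h]

lemma rep_consts : ∀ (m : Tm) (k : Nat),
    k ∈ constsOf (repTm c t m) → k ∈ constsOf m ∨ k ∈ constsOf t := by
  intro m
  induction m with
  | const j =>
      intro k h
      by_cases hj : j = c
      · simp [repTm, hj] at h; exact Or.inr h
      · simp [repTm, hj, constsOf] at h ⊢; exact Or.inl h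
  | var j => intro k h; simp [repTm, constsOf] at h
  | app a b iha ihb =>
      intro k h
      simp only [repTm, constsOf, List.mem_append] at h ⊢
      rcases h with h | h
      · rcases iha k h with h' | h' <;> simp [h']
      · rcases ihb k h with h' | h' <;> simp [h']
  | lam τ a ih => intro k h; exact ih k h

lemma xiTm_rep {Ξ : Finset Nat} (hs : XiTm Ξ s) (htt : XiTm Ξ t) :
    XiTm Ξ (repTm c t s) := by
  intro k hk
  rcases rep_consts s k hk with h | h
  · exact hs k h
  · exact htt k h

lemma xiTm_mono {Ξ : Finset Nat} {c' : Nat} (htt : XiTm Ξ t) :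
    XiTm (insert c' Ξ) t := fun k hk => Finset.mem_insert_of_mem (htt k hk)

lemma rep_main (hcl : ∀ e, liftTm e t = t) (hcs : ∀ e s, substTm e s t = t) :
    ∀ n : Nat,
      (∀ Ξ Γ F, SeqH n Ξ Γ F → c ∈ Ξ → XiTm Ξ t →
        SeqH n Ξ (repFm c t '' Γ) (repFm c t F)) ∧
      (∀ Ξ Γ D u, FocusH n Ξ Γ D u → c ∈ Ξ → XiTm Ξ t →
        FocusH n Ξ (repFm c t '' Γ) (repFm c t D) (repTm c t u)) := by
  intro n
  induction n using Nat.strong_induction_on with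
  | _ n IH =>
    constructor
    · intro Ξ Γ F h hc hXi
      cases h with
      | top => exact SeqH.top
      | @impR n' Ξ' D' Γ' G' h =>
          have h2 := (IH n' (by omega)).1 _ _ _ h hc hXi
          rw [Set.image_insert_eq] at h2
          exact SeqH.impR h2
      | @allR Ξ' c' n' Γ' G' τ' hc' h =>
          have hne : c' ≠ c := fun hEq => hc' (hEq ▸ hc)
          have h2 := (IH n' (by omega)).1 _ _ _ h (Finset.mem_insert_of_mem hc)
            (xiTm_mono hXi)
          rw [rep_substFm hcl hcs] at h2
          have hrc : repTm c t (Tm.const c') = Tm.const c' := by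
            simp [repTm, hne]
          rw [hrc] at h2
          exact SeqH.allR hc' h2
      | @bc Γ' D' n' Ξ' u' hD h =>
          have h2 := (IH n' (by omega)).2 _ _ _ _ h hc hXi
          exact SeqH.bc (Set.mem_image_of_mem _ hD) h2
    · intro Ξ Γ D u h hc hXi
      cases h with
      | init => exact FocusH.init
      | @imp m Ξ' Γ' G' n' D' u' hg hf =>
          have h1 := (IH m (Nat.lt_succ_of_le (Nat.le_max_left _ _))).1 _ _ _ hg hc hXi
          have h2 := (IH n' (Nat.lt_succ_of_le (Nat.le_max_right _ _))).2 _ _ _ _ hf hc hXi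
          exact FocusH.imp h1 h2
      | @all Ξ' s n' Γ' D' u' τ' hs hf =>
          have h2 := (IH n' (by omega)).2 _ _ _ _ hf hc hXi
          rw [rep_substFm hcl hcs] at h2
          exact FocusH.all (xiTm_rep hs hXi) h2
end Rep
/-- Instantiation lemma for hohh: a constant c ∈ Ξ not occurring in the program
    Γ or the goal G can be replaced by any closed Ξ-term t of the same type,
    yielding a derivation of the same height. -/
theorem hohh_instantiation
    (cs : Nat → Ty) (n : Nat) (Ξ : Finset Nat) (Γ : Set Fm) (G : Fm)
    (c : Nat) (t : Tm)
    (hder : SeqH n Ξ Γ (substFm 0 (.const c) G))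
    (hc : c ∈ Ξ)
    (hΓ : ∀ D ∈ Γ, c ∉ constsOfFm D)
    (hG : c ∉ constsOfFm G)
    (ht : XiTm Ξ t)
    (hty : HasTyS cs [] t (cs c)) :
    SeqH n Ξ Γ (substFm 0 t G) := by
  have hvl : varLt 0 t := hasty_varLt hty
  have hcl : ∀ e, liftTm e t = t := fun e => lift_of_varLt t 0 e hvl (Nat.zero_le _)
  have hcs : ∀ e s, substTm e s t = t := fun e s => subst_of_varLt t 0 e s hvl (Nat.zero_le _)
  have h := (rep_main (c := c) hcl hcs n).1 Ξ Γ _ hder hc ht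
  rw [rep_substFm hcl hcs] at h
  have h1 : repTm c t (Tm.const c) = t := by simp [repTm]
  have h2 : repFm c t G = G := rep_nocFm G hG
  have h3 : repFm c t '' Γ = Γ := by
    rw [Set.image_congr (fun D hD => rep_nocFm D (hΓ D hD)), Set.image_id']
  rw [h1, h2, h3] at h
  exact h
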